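/- Let (Λ,d) be a k-graph satisfying the standing assumption (★). Then every cylinder set Z(λ,n) is a compact subset of Λ^Δ in the topology generated by the cylinder sets; moreover, if Λ⁰ is finite then Λ^Δ is compact. -/

import Mathlib

open scoped Classical
open TopologicalSpace MeasureTheory

/-- A `k`-graph: a countable small category with a degree functor to `ℕ^k`
satisfying the unique factorisation property.  Objects are identified with
the degree-zero morphisms. -/
structure KGraph (k : ℕ) where
  Mor : Type
  countable : Countable Mor
  src : Mor → Mor
  rng : Mor → Mor
  deg : Mor → Fin k → ℕ
  comp : (lam mu : Mor) → src lam = rng mu → Mor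
  deg_src : ∀ lam, deg (src lam) = 0
  deg_rng : ∀ lam, deg (rng lam) = 0
  src_obj : ∀ v, deg v = 0 → src v = v
  rng_obj : ∀ v, deg v = 0 → rng v = v
  src_comp : ∀ lam mu h, src (comp lam mu h) = src mu
  rng_comp : ∀ lam mu h, rng (comp lam mu h) = rng lam
  deg_comp : ∀ lam mu h, deg (comp lam mu h) = deg lam + deg mu
  id_comp : ∀ lam (h : src (rng lam) = rng lam), comp (rng lam) lam h = lam
  comp_id : ∀ lam (h : src lam = rng (src lam)), comp lam (src lam) h = lam
  assoc : ∀ l m n (h1 : src l = rng m) (h2 : src m = rng n)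
      (h3 : src (comp l m h1) = rng n) (h4 : src l = rng (comp m n h2)),
      comp (comp l m h1) n h3 = comp l (comp m n h2) h4
  factor : ∀ lam (n1 n2 : Fin k → ℕ), deg lam = n1 + n2 →
      ∃! p : Mor × Mor, deg p.1 = n1 ∧ deg p.2 = n2 ∧
        ∃ h : src p.1 = rng p.2, comp p.1 p.2 h = lam

namespace KGraph

variable {k : ℕ}

/-- The vertices (objects) of a `k`-graph are the degree-zero morphisms. -/
def IsVertex (Λ : KGraph k) (v : Λ.Mor) : Prop := Λ.deg v = 0

/-- Standing assumption (★): for each `p ∈ ℕ^k` the restrictions of `r` and `s`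
to `Λ^p` are surjective (onto the vertices) and finite-to-one. -/
def Star (Λ : KGraph k) : Prop :=
  ∀ p : Fin k → ℕ,
    (∀ v, Λ.IsVertex v →
      (∃ lam, Λ.deg lam = p ∧ Λ.rng lam = v) ∧
      (∃ lam, Λ.deg lam = p ∧ Λ.src lam = v)) ∧
    (∀ v, Λ.IsVertex v →
      {lam | Λ.deg lam = p ∧ Λ.rng lam = v}.Finite ∧
      {lam | Λ.deg lam = p ∧ Λ.src lam = v}.Finite)

/-- Irreducibility (strong connectedness) of a `k`-graph. -/
def Irreducible (Λ : KGraph k) : Prop :=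
  ∀ u v, Λ.IsVertex u → Λ.IsVertex v →
    ∃ lam, Λ.deg lam ≠ 0 ∧ Λ.rng lam = u ∧ Λ.src lam = v

/-- Primitivity of a `k`-graph. -/
def Primitive (Λ : KGraph k) : Prop :=
  ∃ p : Fin k → ℕ, p ≠ 0 ∧ ∀ u v, Λ.IsVertex u → Λ.IsVertex v →
    ∃ lam, Λ.deg lam = p ∧ Λ.rng lam = u ∧ Λ.src lam = v

/-- The degree of a morphism, viewed in `ℤ^k`. -/
def degZ (Λ : KGraph k) (lam : Λ.Mor) : Fin k → ℤ := fun i => (Λ.deg lam i : ℤ)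

/-- The number of morphisms of degree `p` with range `u` and source `v`. -/
noncomputable def count (Λ : KGraph k) (p : Fin k → ℕ) (u v : Λ.Mor) : ℕ :=
  Nat.card {lam : Λ.Mor // Λ.deg lam = p ∧ Λ.rng lam = u ∧ Λ.src lam = v}

end KGraph

/-- A two-sided infinite path in a `k`-graph: a degree-preserving functor from
the `k`-graph `Δ = {(m,n) ∈ ℤ^k × ℤ^k : m ≤ n}` to `Λ`. -/
structure TwoSidedPath {k : ℕ} (Λ : KGraph k) where
  toFun : ∀ m n : Fin k → ℤ, m ≤ n → Λ.Mor
  deg_eq : ∀ m n (h : m ≤ n) (i : Fin k), (Λ.deg (toFun m n h) i : ℤ) = n i - m i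
  src_eq : ∀ m n (h : m ≤ n), Λ.src (toFun m n h) = toFun n n le_rfl
  rng_eq : ∀ m n (h : m ≤ n), Λ.rng (toFun m n h) = toFun m m le_rfl
  comp_eq : ∀ l m n (h1 : l ≤ m) (h2 : m ≤ n),
      Λ.comp (toFun l m h1) (toFun m n h2)
        ((src_eq l m h1).trans (rng_eq m n h2).symm) = toFun l n (h1.trans h2)

/-- A one-sided infinite path in a `k`-graph: a degree-preserving functor from
the `k`-graph `Ω = {(m,n) ∈ ℕ^k × ℕ^k : m ≤ n}` to `Λ`. -/
structure OneSidedPath {k : ℕ} (Λ : KGraph k) where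
  toFun : ∀ m n : Fin k → ℕ, m ≤ n → Λ.Mor
  deg_eq : ∀ m n (h : m ≤ n) (i : Fin k), Λ.deg (toFun m n h) i = n i - m i
  src_eq : ∀ m n (h : m ≤ n), Λ.src (toFun m n h) = toFun n n le_rfl
  rng_eq : ∀ m n (h : m ≤ n), Λ.rng (toFun m n h) = toFun m m le_rfl
  comp_eq : ∀ l m n (h1 : l ≤ m) (h2 : m ≤ n),
      Λ.comp (toFun l m h1) (toFun m n h2)
        ((src_eq l m h1).trans (rng_eq m n h2).symm) = toFun l n (h1.trans h2)

namespace TwoSidedPath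

variable {k : ℕ} {Λ : KGraph k}

theorem toFun_congr (x : TwoSidedPath Λ) {m n m' n' : Fin k → ℤ}
    (hm : m = m') (hn : n = n') (h : m ≤ n) (h' : m' ≤ n') :
    x.toFun m n h = x.toFun m' n' h' := by subst hm; subst hn; rfl

/-- The vertex `x(0)` of a two-sided path. -/
def obj0 (x : TwoSidedPath Λ) : Λ.Mor := x.toFun 0 0 le_rfl

end TwoSidedPath

theorem le_add_degZ {k : ℕ} (Λ : KGraph k) (n : Fin k → ℤ) (lam : Λ.Mor) :
    n ≤ n + Λ.degZ lam :=
  Pi.le_def.mpr fun i => by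
    show n i ≤ n i + (Λ.deg lam i : ℤ); omega

/-- The cylinder set `Z(λ, n) = {x ∈ Λ^Δ : x(n, n + d(λ)) = λ}`. -/
def ZCyl {k : ℕ} (Λ : KGraph k) (lam : Λ.Mor) (n : Fin k → ℤ) :
    Set (TwoSidedPath Λ) :=
  {x | x.toFun n (n + Λ.degZ lam) (le_add_degZ Λ n lam) = lam}

/-- The topology on `Λ^Δ` generated by the cylinder sets. -/
instance {k : ℕ} (Λ : KGraph k) : TopologicalSpace (TwoSidedPath Λ) :=
  TopologicalSpace.generateFrom {S | ∃ lam n, S = ZCyl Λ lam n}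

noncomputable instance {k : ℕ} (Λ : KGraph k) : MeasurableSpace (TwoSidedPath Λ) :=
  borel _

/-- The one-sided cylinder set `Z(λ) = {x ∈ Λ^Ω : x(0, d(λ)) = λ}`. -/
def OCyl {k : ℕ} (Λ : KGraph k) (lam : Λ.Mor) : Set (OneSidedPath Λ) :=
  {x | x.toFun 0 (Λ.deg lam) (Pi.le_def.mpr fun _ => Nat.zero_le _) = lam}

/-- The topology on `Λ^Ω` generated by the cylinder sets. -/
instance {k : ℕ} (Λ : KGraph k) : TopologicalSpace (OneSidedPath Λ) :=
  TopologicalSpace.generateFrom {S | ∃ lam, S = OCyl Λ lam}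

/-- The shift `σ^n` on the two-sided path space, for `n ∈ ℤ^k`. -/
def TwoSidedPath.shift {k : ℕ} {Λ : KGraph k} (n : Fin k → ℤ)
    (x : TwoSidedPath Λ) : TwoSidedPath Λ where
  toFun l m h := x.toFun (l + n) (m + n) (add_le_add_left h n)
  deg_eq l m h i := by
    show (Λ.deg (x.toFun (l + n) (m + n) (add_le_add_left h n)) i : ℤ) = m i - l i
    have h' := x.deg_eq (l + n) (m + n) (add_le_add_left h n) i
    simp only [Pi.add_apply] at h'
    omega
  src_eq l m h := x.src_eq (l + n) (m + n) (add_le_add_left h n)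
  rng_eq l m h := x.rng_eq (l + n) (m + n) (add_le_add_left h n)
  comp_eq l m m' h1 h2 :=
    x.comp_eq (l + n) (m + n) (m' + n) (add_le_add_left h1 n) (add_le_add_left h2 n)

/-- The shift `σ^p` on the one-sided path space, for `p ∈ ℕ^k`. -/
def OneSidedPath.shift {k : ℕ} {Λ : KGraph k} (p : Fin k → ℕ)
    (x : OneSidedPath Λ) : OneSidedPath Λ where
  toFun l m h := x.toFun (l + p) (m + p) (add_le_add_left h p)
  deg_eq l m h i := by
    show Λ.deg (x.toFun (l + p) (m + p) (add_le_add_left h p)) i = m i - l i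
    have h' := x.deg_eq (l + p) (m + p) (add_le_add_left h p) i
    simp only [Pi.add_apply] at h'
    omega
  src_eq l m h := x.src_eq (l + p) (m + p) (add_le_add_left h p)
  rng_eq l m h := x.rng_eq (l + p) (m + p) (add_le_add_left h p)
  comp_eq l m m' h1 h2 :=
    x.comp_eq (l + p) (m + p) (m' + p) (add_le_add_left h1 p) (add_le_add_left h2 p)

/-- The vector `(j, …, j) ∈ ℤ^k`, i.e. `j·e` where `e = (1,…,1)`. -/
def jvecZ (k : ℕ) (j : ℕ) : Fin k → ℤ := fun _ => (j : ℤ)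

theorem neg_jvecZ_le (k j : ℕ) : -(jvecZ k j) ≤ jvecZ k j :=
  Pi.le_def.mpr fun _ => by show -((j : ℤ)) ≤ (j : ℤ); omega

/-- Coercion `ℕ^k → ℤ^k`. -/
def coeZ {k : ℕ} (p : Fin k → ℕ) : Fin k → ℤ := fun i => (p i : ℤ)

theorem coeZ_le_coeZ {k : ℕ} {m n : Fin k → ℕ} (h : m ≤ n) : coeZ m ≤ coeZ n :=
  Pi.le_def.mpr fun i => by
    show ((m i : ℤ)) ≤ (n i : ℤ)
    exact_mod_cast Pi.le_def.mp h i

theorem neg_coeZ_le {k : ℕ} (m : Fin k → ℕ) : -(coeZ m) ≤ coeZ m :=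
  Pi.le_def.mpr fun i => by show -((m i : ℤ)) ≤ (m i : ℤ); omega

/-- The quantity `h(x,y) ∈ ℕ∞`:  `0` if `x(0) ≠ y(0)`, and otherwise
`1 + sup { j : x(-je, je) = y(-je, je) }`. -/
noncomputable def hdist {k : ℕ} {Λ : KGraph k} (x y : TwoSidedPath Λ) : ℕ∞ :=
  if x.obj0 = y.obj0 then
    1 + sSup {c : ℕ∞ | ∃ j : ℕ, c = (j : ℕ∞) ∧
        x.toFun (-(jvecZ k j)) (jvecZ k j) (neg_jvecZ_le k j) =
        y.toFun (-(jvecZ k j)) (jvecZ k j) (neg_jvecZ_le k j)}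
  else 0

/-- The metric `ρ(x,y) = r^{h(x,y)}`, with `r^∞ = 0`. -/
noncomputable def rho {k : ℕ} {Λ : KGraph k} (r : ℝ) (x y : TwoSidedPath Λ) : ℝ :=
  if hdist x y = ⊤ then 0 else r ^ (hdist x y).toNat

/-- The local contracting set `E_x`. -/
def Ex {k : ℕ} {Λ : KGraph k} (x : TwoSidedPath Λ) : Set (TwoSidedPath Λ) :=
  {y | ∀ m n (h : m ≤ n), 0 ≤ m → y.toFun m n h = x.toFun m n h}

/-- The local expanding set `F_x`. -/
def Fx {k : ℕ} {Λ : KGraph k} (x : TwoSidedPath Λ) : Set (TwoSidedPath Λ) :=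
  {y | ∀ m n (h : m ≤ n), n ≤ 0 → y.toFun m n h = x.toFun m n h}

/-- The restriction map `π : Λ^Δ → Λ^Ω`. -/
def TwoSidedPath.restrict {k : ℕ} {Λ : KGraph k} (x : TwoSidedPath Λ) :
    OneSidedPath Λ where
  toFun m n h := x.toFun (coeZ m) (coeZ n) (coeZ_le_coeZ h)
  deg_eq m n h i := by
    show Λ.deg (x.toFun (coeZ m) (coeZ n) (coeZ_le_coeZ h)) i = n i - m i
    have h' := x.deg_eq (coeZ m) (coeZ n) (coeZ_le_coeZ h) i
    simp only [coeZ] at h'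
    omega
  src_eq m n h := x.src_eq (coeZ m) (coeZ n) (coeZ_le_coeZ h)
  rng_eq m n h := x.rng_eq (coeZ m) (coeZ n) (coeZ_le_coeZ h)
  comp_eq l m n h1 h2 :=
    x.comp_eq (coeZ l) (coeZ m) (coeZ n) (coeZ_le_coeZ h1) (coeZ_le_coeZ h2)

/-- Stable equivalence: `x ∼ₛ y` iff the two paths eventually agree to the right. -/
def SRel {k : ℕ} {Λ : KGraph k} (x y : TwoSidedPath Λ) : Prop :=
  ∃ m : Fin k → ℤ, ∀ n (h : m ≤ n), x.toFun m n h = y.toFun m n h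

/-- Unstable equivalence: `x ∼ᵤ y` iff the two paths eventually agree to the left. -/
def URel {k : ℕ} {Λ : KGraph k} (x y : TwoSidedPath Λ) : Prop :=
  ∃ n : Fin k → ℤ, ∀ m (h : m ≤ n), x.toFun m n h = y.toFun m n h

/-- Asymptotic equivalence: `x ∼ₐ y` iff `x ∼ₛ y` and `x ∼ᵤ y`. -/
def ARel {k : ℕ} {Λ : KGraph k} (x y : TwoSidedPath Λ) : Prop :=
  ∃ m : Fin k → ℕ, ∀ n : Fin k → ℤ, coeZ m ≤ n →
    (∀ h : coeZ m ≤ n, x.toFun (coeZ m) n h = y.toFun (coeZ m) n h) ∧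
    (∀ h' : -n ≤ -(coeZ m), x.toFun (-n) (-(coeZ m)) h' = y.toFun (-n) (-(coeZ m)) h')

/-- The groupoid `G_{s,m}` of pairs agreeing from `m ∈ ℤ^k` onwards. -/
def Gsm {k : ℕ} (Λ : KGraph k) (m : Fin k → ℤ) :
    Set (TwoSidedPath Λ × TwoSidedPath Λ) :=
  {p | ∀ n (h : m ≤ n), p.1.toFun m n h = p.2.toFun m n h}

theorem TwoSidedPath.self_mem_cyl {k : ℕ} {Λ : KGraph k} (x : TwoSidedPath Λ)
    (m n : Fin k → ℤ) (h : m ≤ n) : x ∈ ZCyl Λ (x.toFun m n h) m := by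
  show x.toFun m (m + Λ.degZ (x.toFun m n h)) _ = x.toFun m n h
  apply x.toFun_congr rfl
  funext i
  show m i + (Λ.deg (x.toFun m n h) i : ℤ) = n i
  have h' := x.deg_eq m n h i
  omega

theorem degZ_obj0 {k : ℕ} {Λ : KGraph k} (x : TwoSidedPath Λ) :
    Λ.degZ x.obj0 = 0 := by
  funext i
  show (Λ.deg (x.toFun 0 0 le_rfl) i : ℤ) = 0
  have h' := x.deg_eq 0 0 le_rfl i
  simp only [Pi.zero_apply] at h'
  omega

theorem mem_vertex_cyl {k : ℕ} {Λ : KGraph k} {x z : TwoSidedPath Λ}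
    (hz : z ∈ ZCyl Λ x.obj0 0) : z.obj0 = x.obj0 := by
  have h0 : (0 : Fin k → ℤ) = 0 + Λ.degZ x.obj0 := by rw [degZ_obj0]; simp
  calc z.obj0 = z.toFun 0 (0 + Λ.degZ x.obj0) (le_add_degZ Λ 0 x.obj0) :=
        z.toFun_congr rfl h0 le_rfl (le_add_degZ Λ 0 x.obj0)
    _ = x.obj0 := hz


section Aux

variable {k : ℕ} {Λ : KGraph k}

/-- Index type for coordinates of a two-sided path. -/
def Idx (k : ℕ) : Type := {p : (Fin k → ℤ) × (Fin k → ℤ) // p.1 ≤ p.2}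

/-- The coordinate map `Λ^Δ → ∏ Mor`. -/
def Phi (x : TwoSidedPath Λ) : Idx k → Λ.Mor := fun i => x.toFun i.1.1 i.1.2 i.2

/-- Componentwise `(n - m).toNat`. -/
def natDiff (m n : Fin k → ℤ) : Fin k → ℕ := fun i => (n i - m i).toNat

theorem degSeg (x : TwoSidedPath Λ) (m n : Fin k → ℤ) (h : m ≤ n) :
    Λ.deg (x.toFun m n h) = natDiff m n := by
  funext i
  have := x.deg_eq m n h i
  simp only [natDiff]
  omega

theorem natDiff_add {a m b : Fin k → ℤ} (h1 : a ≤ m) (h2 : m ≤ b) :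
    natDiff a b = natDiff a m + natDiff m b := by
  funext i
  have ha := Pi.le_def.mp h1 i
  have hb := Pi.le_def.mp h2 i
  simp only [natDiff, Pi.add_apply]
  omega

theorem comp_congr (Λ : KGraph k) {a a' b b' : Λ.Mor} (ha : a = a') (hb : b = b')
    (h : Λ.src a = Λ.rng b) (h' : Λ.src a' = Λ.rng b') :
    Λ.comp a b h = Λ.comp a' b' h' := by subst ha; subst hb; rfl

/-- Left factor of a morphism (junk value if degrees don't match). -/
noncomputable def facL (Λ : KGraph k) (γ : Λ.Mor) (p1 p2 : Fin k → ℕ) : Λ.Mor :=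
  if h : Λ.deg γ = p1 + p2 then (Λ.factor γ p1 p2 h).exists.choose.1 else γ

/-- Right factor of a morphism (junk value if degrees don't match). -/
noncomputable def facR (Λ : KGraph k) (γ : Λ.Mor) (p1 p2 : Fin k → ℕ) : Λ.Mor :=
  if h : Λ.deg γ = p1 + p2 then (Λ.factor γ p1 p2 h).exists.choose.2 else γ

theorem fac_eq (Λ : KGraph k) {c1 c2 γ : Λ.Mor} {p1 p2 : Fin k → ℕ}
    (h1 : Λ.deg c1 = p1) (h2 : Λ.deg c2 = p2) (hc : Λ.src c1 = Λ.rng c2)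
    (hγ : Λ.comp c1 c2 hc = γ) :
    facL Λ γ p1 p2 = c1 ∧ facR Λ γ p1 p2 = c2 := by
  subst h1; subst h2; subst hγ
  have hd : Λ.deg (Λ.comp c1 c2 hc) = Λ.deg c1 + Λ.deg c2 := Λ.deg_comp c1 c2 hc
  have hfac := Λ.factor (Λ.comp c1 c2 hc) (Λ.deg c1) (Λ.deg c2) hd
  have hspec := hfac.exists.choose_spec
  have huniq := hfac.unique (y₁ := (c1, c2)) (y₂ := hfac.exists.choose)
    ⟨rfl, rfl, hc, rfl⟩ hspec
  unfold facL facR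
  rw [dif_pos hd, dif_pos hd, ← huniq]
  exact ⟨rfl, rfl⟩

/-- The set of coordinate functions coming from genuine two-sided paths. -/
def PathSet (Λ : KGraph k) : Set (Idx k → Λ.Mor) :=
  {f | (∀ i : Idx k, ∀ j, (Λ.deg (f i) j : ℤ) = i.1.2 j - i.1.1 j) ∧
       (∀ i : Idx k, Λ.src (f i) = f ⟨(i.1.2, i.1.2), le_rfl⟩) ∧
       (∀ i : Idx k, Λ.rng (f i) = f ⟨(i.1.1, i.1.1), le_rfl⟩) ∧
       (∀ (l m n : Fin k → ℤ) (h1 : l ≤ m) (h2 : m ≤ n)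
          (hc : Λ.src (f ⟨(l, m), h1⟩) = Λ.rng (f ⟨(m, n), h2⟩)),
          Λ.comp (f ⟨(l, m), h1⟩) (f ⟨(m, n), h2⟩) hc = f ⟨(l, n), h1.trans h2⟩)}

theorem phi_mem_pathSet (x : TwoSidedPath Λ) : Phi x ∈ PathSet Λ := by
  refine ⟨fun i j => x.deg_eq _ _ _ _, fun i => x.src_eq _ _ _,
    fun i => x.rng_eq _ _ _, fun l m n h1 h2 hc => ?_⟩
  exact (comp_congr Λ rfl rfl hc _).trans (x.comp_eq l m n h1 h2)

theorem pathSet_subset_range (f : Idx k → Λ.Mor) (hf : f ∈ PathSet Λ) :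
    ∃ x : TwoSidedPath Λ, Phi x = f := by
  obtain ⟨hdeg, hsrc, hrng, hcomp⟩ := hf
  refine ⟨⟨fun m n h => f ⟨(m, n), h⟩, fun m n h j => hdeg ⟨(m, n), h⟩ j,
    fun m n h => hsrc ⟨(m, n), h⟩, fun m n h => hrng ⟨(m, n), h⟩,
    fun l m n h1 h2 => hcomp l m n h1 h2 _⟩, rfl⟩

theorem pathSet_isClosed [TopologicalSpace Λ.Mor] [DiscreteTopology Λ.Mor] :
    IsClosed (PathSet Λ) := by
  have h1 : IsClosed {f : Idx k → Λ.Mor |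
      ∀ i : Idx k, ∀ j, (Λ.deg (f i) j : ℤ) = i.1.2 j - i.1.1 j} := by
    have : {f : Idx k → Λ.Mor | ∀ i : Idx k, ∀ j, (Λ.deg (f i) j : ℤ) = i.1.2 j - i.1.1 j}
        = ⋂ (i : Idx k), (fun f : Idx k → Λ.Mor => f i) ⁻¹'
          {a | ∀ j, (Λ.deg a j : ℤ) = i.1.2 j - i.1.1 j} := by
      ext f; simp [Set.mem_iInter]
    rw [this]
    exact isClosed_iInter fun i =>
      (isClosed_discrete _).preimage (continuous_apply i)
  have h2 : IsClosed {f : Idx k → Λ.Mor |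
      ∀ i : Idx k, Λ.src (f i) = f ⟨(i.1.2, i.1.2), le_rfl⟩} := by
    have : {f : Idx k → Λ.Mor | ∀ i : Idx k, Λ.src (f i) = f ⟨(i.1.2, i.1.2), le_rfl⟩}
        = ⋂ (i : Idx k), (fun f : Idx k → Λ.Mor => (f i, f ⟨(i.1.2, i.1.2), le_rfl⟩)) ⁻¹'
          {q : Λ.Mor × Λ.Mor | Λ.src q.1 = q.2} := by
      ext f; simp [Set.mem_iInter]
    rw [this]
    exact isClosed_iInter fun i => (isClosed_discrete _).preimage
      ((continuous_apply i).prodMk (continuous_apply _))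
  have h3 : IsClosed {f : Idx k → Λ.Mor |
      ∀ i : Idx k, Λ.rng (f i) = f ⟨(i.1.1, i.1.1), le_rfl⟩} := by
    have : {f : Idx k → Λ.Mor | ∀ i : Idx k, Λ.rng (f i) = f ⟨(i.1.1, i.1.1), le_rfl⟩}
        = ⋂ (i : Idx k), (fun f : Idx k → Λ.Mor => (f i, f ⟨(i.1.1, i.1.1), le_rfl⟩)) ⁻¹'
          {q : Λ.Mor × Λ.Mor | Λ.rng q.1 = q.2} := by
      ext f; simp [Set.mem_iInter]
    rw [this]
    exact isClosed_iInter fun i => (isClosed_discrete _).preimage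
      ((continuous_apply i).prodMk (continuous_apply _))
  have h4 : IsClosed {f : Idx k → Λ.Mor |
      ∀ (l m n : Fin k → ℤ) (h1 : l ≤ m) (h2 : m ≤ n)
        (hc : Λ.src (f ⟨(l, m), h1⟩) = Λ.rng (f ⟨(m, n), h2⟩)),
        Λ.comp (f ⟨(l, m), h1⟩) (f ⟨(m, n), h2⟩) hc = f ⟨(l, n), h1.trans h2⟩} := by
    have : {f : Idx k → Λ.Mor |
        ∀ (l m n : Fin k → ℤ) (h1 : l ≤ m) (h2 : m ≤ n)
          (hc : Λ.src (f ⟨(l, m), h1⟩) = Λ.rng (f ⟨(m, n), h2⟩)),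
          Λ.comp (f ⟨(l, m), h1⟩) (f ⟨(m, n), h2⟩) hc = f ⟨(l, n), h1.trans h2⟩}
        = ⋂ (l : Fin k → ℤ) (m : Fin k → ℤ) (n : Fin k → ℤ),
          {f : Idx k → Λ.Mor | ∀ (h1 : l ≤ m) (h2 : m ≤ n)
            (hc : Λ.src (f ⟨(l, m), h1⟩) = Λ.rng (f ⟨(m, n), h2⟩)),
            Λ.comp (f ⟨(l, m), h1⟩) (f ⟨(m, n), h2⟩) hc = f ⟨(l, n), h1.trans h2⟩} := by
      ext f; simp [Set.mem_iInter]
    rw [this]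
    refine isClosed_iInter fun l => isClosed_iInter fun m => isClosed_iInter fun n => ?_
    by_cases h1 : l ≤ m
    · by_cases h2 : m ≤ n
      · have : {f : Idx k → Λ.Mor | ∀ (h1 : l ≤ m) (h2 : m ≤ n)
            (hc : Λ.src (f ⟨(l, m), h1⟩) = Λ.rng (f ⟨(m, n), h2⟩)),
            Λ.comp (f ⟨(l, m), h1⟩) (f ⟨(m, n), h2⟩) hc = f ⟨(l, n), h1.trans h2⟩}
            = (fun f : Idx k → Λ.Mor =>
                (f ⟨(l, m), h1⟩, f ⟨(m, n), h2⟩, f ⟨(l, n), h1.trans h2⟩)) ⁻¹'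
              {q : Λ.Mor × Λ.Mor × Λ.Mor |
                ∀ hc : Λ.src q.1 = Λ.rng q.2.1, Λ.comp q.1 q.2.1 hc = q.2.2} := by
          ext f
          constructor
          · intro hf hc; exact hf h1 h2 hc
          · intro hf h1' h2' hc; exact hf hc
        rw [this]
        exact (isClosed_discrete _).preimage
          ((continuous_apply _).prodMk ((continuous_apply _).prodMk (continuous_apply _)))
      · have : {f : Idx k → Λ.Mor | ∀ (h1 : l ≤ m) (h2 : m ≤ n)
            (hc : Λ.src (f ⟨(l, m), h1⟩) = Λ.rng (f ⟨(m, n), h2⟩)),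
            Λ.comp (f ⟨(l, m), h1⟩) (f ⟨(m, n), h2⟩) hc = f ⟨(l, n), h1.trans h2⟩}
            = Set.univ := by
          ext f; simp only [Set.mem_setOf_eq, Set.mem_univ, iff_true]
          intro _ h2' _; exact absurd h2' h2
        rw [this]; exact isClosed_univ
    · have : {f : Idx k → Λ.Mor | ∀ (h1 : l ≤ m) (h2 : m ≤ n)
          (hc : Λ.src (f ⟨(l, m), h1⟩) = Λ.rng (f ⟨(m, n), h2⟩)),
          Λ.comp (f ⟨(l, m), h1⟩) (f ⟨(m, n), h2⟩) hc = f ⟨(l, n), h1.trans h2⟩}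
          = Set.univ := by
        ext f; simp only [Set.mem_setOf_eq, Set.mem_univ, iff_true]
        intro h1' _ _; exact absurd h1' h1
      rw [this]; exact isClosed_univ
  exact h1.inter (h2.inter (h3.inter h4))

end Aux
section Aux2

variable {k : ℕ} {Λ : KGraph k}

/-- Composition with `lam` in the middle, totalised with junk values. -/
noncomputable def gcomp (Λ : KGraph k) (lam : Λ.Mor) : Λ.Mor × Λ.Mor → Λ.Mor := fun q =>
  if h1 : Λ.src q.1 = Λ.rng lam then
    if h2 : Λ.src (Λ.comp q.1 lam h1) = Λ.rng q.2 then Λ.comp (Λ.comp q.1 lam h1) q.2 h2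
    else q.1
  else q.1

/-- A finite superset of the possible values of the `i`-th coordinate on `ZCyl Λ lam n`. -/
noncomputable def Fset (Λ : KGraph k) (lam : Λ.Mor) (n : Fin k → ℤ) (i : Idx k) :
    Set Λ.Mor :=
  (fun γ => facL Λ (facR Λ γ (natDiff (i.1.1 ⊓ n) i.1.1)
      (natDiff i.1.1 (i.1.2 ⊔ (n + Λ.degZ lam))))
    (natDiff i.1.1 i.1.2) (natDiff i.1.2 (i.1.2 ⊔ (n + Λ.degZ lam)))) ''
  (gcomp Λ lam ''
    ({α | Λ.deg α = natDiff (i.1.1 ⊓ n) n ∧ Λ.src α = Λ.rng lam} ×ˢ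
     {β | Λ.deg β = natDiff (n + Λ.degZ lam) (i.1.2 ⊔ (n + Λ.degZ lam)) ∧
          Λ.rng β = Λ.src lam}))

theorem fset_finite (hstar : Λ.Star) (lam : Λ.Mor) (n : Fin k → ℤ) (i : Idx k) :
    (Fset Λ lam n i).Finite := by
  have hv1 : Λ.IsVertex (Λ.rng lam) := Λ.deg_rng lam
  have hv2 : Λ.IsVertex (Λ.src lam) := Λ.deg_src lam
  have hA : {α | Λ.deg α = natDiff (i.1.1 ⊓ n) n ∧ Λ.src α = Λ.rng lam}.Finite :=
    ((hstar (natDiff (i.1.1 ⊓ n) n)).2 (Λ.rng lam) hv1).2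
  have hB : {β | Λ.deg β = natDiff (n + Λ.degZ lam) (i.1.2 ⊔ (n + Λ.degZ lam)) ∧
      Λ.rng β = Λ.src lam}.Finite :=
    ((hstar (natDiff (n + Λ.degZ lam) (i.1.2 ⊔ (n + Λ.degZ lam)))).2 (Λ.src lam) hv2).1
  exact ((hA.prod hB).image _).image _

theorem mem_fset {lam : Λ.Mor} {n : Fin k → ℤ} {x : TwoSidedPath Λ}
    (hx : x ∈ ZCyl Λ lam n) (i : Idx k) : Phi x i ∈ Fset Λ lam n i := by
  obtain ⟨⟨m, m'⟩, hmm : m ≤ m'⟩ := i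
  have hx' : x.toFun n (n + Λ.degZ lam) (le_add_degZ Λ n lam) = lam := hx
  set dl := Λ.degZ lam with hdl
  set a := m ⊓ n with ha
  set b := m' ⊔ (n + dl) with hb
  have ham : a ≤ m := inf_le_left
  have han : a ≤ n := inf_le_right
  have hmb : m' ≤ b := le_sup_left
  have hnb : n + dl ≤ b := le_sup_right
  have hndl : n ≤ n + dl := le_add_degZ Λ n lam
  have hab : a ≤ b := ham.trans (hmm.trans hmb)
  have hanl : a ≤ n + dl := han.trans hndl
  -- the candidate α, β
  set α := x.toFun a n han with hα
  set β := x.toFun (n + dl) b hnb with hβ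
  have hsrcα : Λ.src α = Λ.rng lam := by
    rw [hα, x.src_eq, ← hx', x.rng_eq]
  have hαA : α ∈ {α | Λ.deg α = natDiff a n ∧ Λ.src α = Λ.rng lam} :=
    ⟨degSeg x a n han, hsrcα⟩
  have hβB : β ∈ {β | Λ.deg β = natDiff (n + dl) b ∧ Λ.rng β = Λ.src lam} := by
    refine ⟨degSeg x (n + dl) b hnb, ?_⟩
    rw [hβ, x.rng_eq, ← hx', x.src_eq]
  -- g (α, β) = x (a, b)
  have hcomp1 : Λ.comp α lam hsrcα = x.toFun a (n + dl) hanl := by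
    refine (comp_congr Λ rfl hx'.symm hsrcα ?_).trans (x.comp_eq a n (n + dl) han hndl)
    rw [x.src_eq, x.rng_eq]
  have hsrc2 : Λ.src (Λ.comp α lam hsrcα) = Λ.rng β := by
    rw [hcomp1, x.src_eq, hβ, x.rng_eq]
  have hg : gcomp Λ lam (α, β) = x.toFun a b hab := by
    unfold gcomp
    rw [dif_pos hsrcα, dif_pos hsrc2]
    refine (comp_congr Λ hcomp1 rfl hsrc2 ?_).trans (x.comp_eq a (n + dl) b hanl hnb)
    rw [x.src_eq, x.rng_eq]
  -- extract the middle factor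
  have hfacR : facR Λ (x.toFun a b hab) (natDiff a m) (natDiff m b) =
      x.toFun m b (hmm.trans hmb) :=
    (fac_eq Λ (degSeg x a m ham) (degSeg x m b (hmm.trans hmb))
      ((x.src_eq a m ham).trans (x.rng_eq m b (hmm.trans hmb)).symm)
      (x.comp_eq a m b ham (hmm.trans hmb))).2
  have hfacL : facL Λ (x.toFun m b (hmm.trans hmb)) (natDiff m m') (natDiff m' b) =
      x.toFun m m' hmm :=
    (fac_eq Λ (degSeg x m m' hmm) (degSeg x m' b hmb)
      ((x.src_eq m m' hmm).trans (x.rng_eq m' b hmb).symm)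
      (x.comp_eq m m' b hmm hmb)).1
  refine ⟨gcomp Λ lam (α, β), ⟨(α, β), ⟨hαA, hβB⟩, rfl⟩, ?_⟩
  show facL Λ (facR Λ (gcomp Λ lam (α, β)) (natDiff a m) (natDiff m b))
      (natDiff m m') (natDiff m' b) = x.toFun m m' hmm
  rw [hg, hfacR, hfacL]

end Aux2
section Aux3

variable {k : ℕ} {Λ : KGraph k}

theorem cyl_isOpen (lam : Λ.Mor) (n : Fin k → ℤ) : IsOpen (ZCyl Λ lam n) :=
  TopologicalSpace.GenerateOpen.basic _ ⟨lam, n, rfl⟩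

theorem coord_set_isOpen (m n : Fin k → ℤ) (h : m ≤ n) (c : Λ.Mor) :
    IsOpen {x : TwoSidedPath Λ | x.toFun m n h = c} := by
  by_cases hdc : n = m + Λ.degZ c
  · have : {x : TwoSidedPath Λ | x.toFun m n h = c} = ZCyl Λ c m := by
      ext x
      exact ⟨fun hx => (x.toFun_congr rfl hdc.symm (le_add_degZ Λ m c) h).trans hx,
        fun hx => (x.toFun_congr rfl hdc h (le_add_degZ Λ m c)).trans hx⟩
    rw [this]; exact cyl_isOpen c m
  · have : {x : TwoSidedPath Λ | x.toFun m n h = c} = ∅ := by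
      ext x
      simp only [Set.mem_setOf_eq, Set.mem_empty_iff_false, iff_false]
      intro hx
      apply hdc
      funext i
      have := x.deg_eq m n h i
      rw [hx] at this
      show n i = m i + (Λ.deg c i : ℤ)
      omega
    rw [this]; exact isOpen_empty
  end Aux3
section Aux4

variable {k : ℕ} {Λ : KGraph k}

theorem phi_continuous [TopologicalSpace Λ.Mor] [DiscreteTopology Λ.Mor] :
    Continuous (Phi (Λ := Λ)) := by
  refine continuous_pi fun i => ?_
  rw [continuous_def]
  intro U _
  have : (fun x : TwoSidedPath Λ => Phi x i) ⁻¹' U =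
      ⋃ c ∈ U, {x : TwoSidedPath Λ | x.toFun i.1.1 i.1.2 i.2 = c} := by
    ext x
    simp only [Set.mem_preimage, Set.mem_iUnion, Set.mem_setOf_eq]
    exact ⟨fun hx => ⟨Phi x i, hx, rfl⟩, fun ⟨c, hc, hxc⟩ => by rw [show Phi x i = c from hxc]; exact hc⟩
  rw [this]
  exact isOpen_biUnion fun c _ => coord_set_isOpen i.1.1 i.1.2 i.2 c

theorem phi_inducing [TopologicalSpace Λ.Mor] [DiscreteTopology Λ.Mor] :
    Topology.IsInducing (Phi (Λ := Λ)) := by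
  constructor
  refine le_antisymm (continuous_iff_le_induced.mp phi_continuous) ?_
  refine le_generateFrom ?_
  rintro S ⟨lam, n, rfl⟩
  have : ZCyl Λ lam n = Phi ⁻¹'
      ((fun f : Idx k → Λ.Mor => f ⟨(n, n + Λ.degZ lam), le_add_degZ Λ n lam⟩) ⁻¹' {lam}) :=
    rfl
  rw [this]
  exact isOpen_induced ((isOpen_discrete _).preimage (continuous_apply _))

theorem phi_image_cyl (lam : Λ.Mor) (n : Fin k → ℤ) :
    Phi '' ZCyl Λ lam n = PathSet Λ ∩
      {f : Idx k → Λ.Mor | f ⟨(n, n + Λ.degZ lam), le_add_degZ Λ n lam⟩ = lam} := by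
  ext f
  constructor
  · rintro ⟨x, hx, rfl⟩
    exact ⟨phi_mem_pathSet x, hx⟩
  · rintro ⟨hf, hcyl⟩
    obtain ⟨x, rfl⟩ := pathSet_subset_range f hf
    exact ⟨x, hcyl, rfl⟩

end Aux4

/-- Under (★) every cylinder set `Z(λ, n)` is compact in the
cylinder topology on `Λ^Δ`; if moreover `Λ⁰` is finite, `Λ^Δ` is compact. -/
theorem cylinder_isCompact {k : ℕ} (hk : 0 < k) (Λ : KGraph k) (hstar : Λ.Star) :
    (∀ (lam : Λ.Mor) (n : Fin k → ℤ), IsCompact (ZCyl Λ lam n)) ∧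
    ({v : Λ.Mor | Λ.IsVertex v}.Finite → CompactSpace (TwoSidedPath Λ)) := by
  letI : TopologicalSpace Λ.Mor := ⊥
  haveI : DiscreteTopology Λ.Mor := ⟨rfl⟩
  have hpart1 : ∀ (lam : Λ.Mor) (n : Fin k → ℤ), IsCompact (ZCyl Λ lam n) := by
    intro lam n
    rw [phi_inducing.isCompact_iff, phi_image_cyl]
    have hc2 : IsClosed {f : Idx k → Λ.Mor |
        f ⟨(n, n + Λ.degZ lam), le_add_degZ Λ n lam⟩ = lam} := by
      have heq : {f : Idx k → Λ.Mor | f ⟨(n, n + Λ.degZ lam), le_add_degZ Λ n lam⟩ = lam} =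
          (fun f : Idx k → Λ.Mor => f ⟨(n, n + Λ.degZ lam), le_add_degZ Λ n lam⟩) ⁻¹'
            {lam} := rfl
      rw [heq]
      exact (isClosed_discrete _).preimage (continuous_apply _)
    refine IsCompact.of_isClosed_subset
      (isCompact_univ_pi fun i => (fset_finite hstar lam n i).isCompact)
      (pathSet_isClosed.inter hc2) ?_
    rintro f ⟨hf, hcyl⟩
    obtain ⟨x, rfl⟩ := pathSet_subset_range f hf
    intro i _
    exact mem_fset hcyl i
  refine ⟨hpart1, fun hfin => ?_⟩
  constructor
  have huniv : (Set.univ : Set (TwoSidedPath Λ)) = ⋃ v ∈ {v | Λ.IsVertex v}, ZCyl Λ v 0 := by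
    ext x
    simp only [Set.mem_univ, true_iff, Set.mem_iUnion]
    refine ⟨x.obj0, ?_, x.self_mem_cyl 0 0 le_rfl⟩
    show Λ.deg x.obj0 = 0
    funext i
    have hh := x.deg_eq 0 0 le_rfl i
    simp only [Pi.zero_apply] at hh
    show Λ.deg (x.toFun 0 0 le_rfl) i = 0
    omega
  rw [huniv]
  exact hfin.isCompact_biUnion fun v _ => hpart1 v 0
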